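/- The second derivative of the flat-pricing revenue is R''(p) = N̂ p^{(1-σ-θ)/θ} [ ηκ p^{(1-θ)/θ}(2−θ−σ) − (1+θ−σ) ] / (Zθ²). Hence R is concave on [0, p̄) and convex on (p̄, p_max), where p̄ = ((1+θ−σ)/(ηκ(2−θ−σ)))^{θ/(1-θ)}. -/

import Mathlib

/-- Second derivative of the flat-pricing revenue, and the resulting
concavity on [0, p̄) and convexity on (p̄, p_max). -/
theorem flat_pricing_revenue_second_deriv
    (θ σ Φmax Z N κ η : ℝ)
    (hθ0 : 0 < θ) (hθ1 : θ < 1) (hσ0 : 0 < σ) (hσ1 : σ < 1)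
    (hΦ : 0 < Φmax) (hZ : Z = Φmax ^ (1 - σ) / (1 - σ))
    (hN : 0 < N) (hκ0 : 0 < κ) (hκ1 : κ ≤ 1) (hη : 0 < η)
    (R R' : ℝ → ℝ)
    (hR : ∀ p : ℝ, R p =
      N * (p * (1 - p ^ ((1 - σ) / θ) / (Z * (1 - σ)))
        - η * κ * (Φmax ^ (2 - σ) - p ^ ((2 - σ) / θ)) / (Z * (2 - σ))))
    (hR' : ∀ p : ℝ, R' p =
      N * (1 - (1 + (1 - σ) / θ) * p ^ ((1 - σ) / θ) / (Z * (1 - σ))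
        + η * κ * p ^ ((2 - σ) / θ - 1) / (Z * θ))) :
    (∀ p ∈ Set.Ioo (0:ℝ) (Φmax ^ θ),
      HasDerivAt R'
        (N * p ^ ((1 - σ - θ) / θ) *
          ((η * κ * p ^ ((1 - θ) / θ) * (2 - θ - σ) - (1 + θ - σ)) / (Z * θ ^ 2))) p) ∧
    ConcaveOn ℝ (Set.Ico (0:ℝ) (((1 + θ - σ) / (η * κ * (2 - θ - σ))) ^ (θ / (1 - θ)))) R ∧
    ConvexOn ℝ (Set.Ioo (((1 + θ - σ) / (η * κ * (2 - θ - σ))) ^ (θ / (1 - θ))) (Φmax ^ θ)) R := by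
  have hθne : θ ≠ 0 := hθ0.ne'
  have h1θ : (0:ℝ) < 1 - θ := by linarith
  have h1σ : (0:ℝ) < 1 - σ := by linarith
  have h2σ : (0:ℝ) < 2 - σ := by linarith
  have h1θσ : (0:ℝ) < 1 + θ - σ := by linarith
  have h2θσ : (0:ℝ) < 2 - θ - σ := by linarith
  have hZpos : 0 < Z := by
    rw [hZ]; exact div_pos (Real.rpow_pos_of_pos hΦ _) h1σ
  set X : ℝ := (1 + θ - σ) / (η * κ * (2 - θ - σ)) with hXdef
  have hXpos : 0 < X := div_pos h1θσ (by positivity)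
  set pb : ℝ := X ^ (θ / (1 - θ)) with hpb
  have hpbpos : 0 < pb := Real.rpow_pos_of_pos hXpos _
  -- first derivative of R at positive points
  have hRd : ∀ p : ℝ, 0 < p → HasDerivAt R (R' p) p := by
    intro p hp
    have ha : HasDerivAt (fun x : ℝ => x ^ ((1 - σ) / θ))
        (((1 - σ) / θ) * p ^ ((1 - σ) / θ - 1)) p :=
      Real.hasDerivAt_rpow_const (Or.inl hp.ne')
    have hc : HasDerivAt (fun x : ℝ => x ^ ((2 - σ) / θ))
        (((2 - σ) / θ) * p ^ ((2 - σ) / θ - 1)) p :=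
      Real.hasDerivAt_rpow_const (Or.inl hp.ne')
    have t1 : HasDerivAt (fun x : ℝ => x * (1 - x ^ ((1 - σ) / θ) / (Z * (1 - σ))))
        (1 * (1 - p ^ ((1 - σ) / θ) / (Z * (1 - σ))) +
          p * (0 - ((1 - σ) / θ) * p ^ ((1 - σ) / θ - 1) / (Z * (1 - σ)))) p :=
      (hasDerivAt_id p).mul ((hasDerivAt_const p (1:ℝ)).sub (ha.div_const _))
    have t2 : HasDerivAt (fun x : ℝ => η * κ * (Φmax ^ (2 - σ) - x ^ ((2 - σ) / θ)) / (Z * (2 - σ)))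
        (η * κ * (0 - ((2 - σ) / θ) * p ^ ((2 - σ) / θ - 1)) / (Z * (2 - σ))) p :=
      (((hasDerivAt_const p (Φmax ^ (2 - σ))).sub hc).const_mul (η * κ)).div_const _
    have t3 := ((t1.sub t2).const_mul N)
    have heq : (fun x : ℝ => N * (x * (1 - x ^ ((1 - σ) / θ) / (Z * (1 - σ)))
        - η * κ * (Φmax ^ (2 - σ) - x ^ ((2 - σ) / θ)) / (Z * (2 - σ)))) = R :=
      funext fun x => (hR x).symm
    simp only [Pi.sub_apply] at t3
    rw [heq] at t3
    refine t3.congr_deriv ?_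
    rw [hR']
    rw [show (2 - σ) / θ - 1 = (2 - σ - θ) / θ by field_simp,
      Real.rpow_sub hp, Real.rpow_one]
    field_simp
    ring
  -- second derivative
  have hR'd : ∀ p : ℝ, 0 < p → HasDerivAt R'
      (N * p ^ ((1 - σ - θ) / θ) *
        ((η * κ * p ^ ((1 - θ) / θ) * (2 - θ - σ) - (1 + θ - σ)) / (Z * θ ^ 2))) p := by
    intro p hp
    have ha : HasDerivAt (fun x : ℝ => x ^ ((1 - σ) / θ))
        (((1 - σ) / θ) * p ^ ((1 - σ) / θ - 1)) p :=
      Real.hasDerivAt_rpow_const (Or.inl hp.ne')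
    have hb : HasDerivAt (fun x : ℝ => x ^ ((2 - σ) / θ - 1))
        (((2 - σ) / θ - 1) * p ^ ((2 - σ) / θ - 1 - 1)) p :=
      Real.hasDerivAt_rpow_const (Or.inl hp.ne')
    have t1 : HasDerivAt (fun x : ℝ => N * (1 - (1 + (1 - σ) / θ) * x ^ ((1 - σ) / θ) / (Z * (1 - σ))
        + η * κ * x ^ ((2 - σ) / θ - 1) / (Z * θ)))
        (N * ((0 - (1 + (1 - σ) / θ) * (((1 - σ) / θ) * p ^ ((1 - σ) / θ - 1)) / (Z * (1 - σ)))
          + η * κ * (((2 - σ) / θ - 1) * p ^ ((2 - σ) / θ - 1 - 1)) / (Z * θ))) p := by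
      exact ((((hasDerivAt_const p (1:ℝ)).sub ((ha.const_mul _).div_const _)).add
        ((hb.const_mul (η * κ)).div_const _)).const_mul N)
    have heq : (fun x : ℝ => N * (1 - (1 + (1 - σ) / θ) * x ^ ((1 - σ) / θ) / (Z * (1 - σ))
        + η * κ * x ^ ((2 - σ) / θ - 1) / (Z * θ))) = R' := funext fun x => (hR' x).symm
    rw [heq] at t1
    convert t1 using 1
    have e1 : (1 - σ) / θ - 1 = (1 - σ - θ) / θ := by field_simp
    have e2 : (2 - σ) / θ - 1 - 1 = (1 - σ - θ) / θ + (1 - θ) / θ := by field_simp; ring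
    rw [e1, e2, Real.rpow_add hp]
    field_simp
    ring
  refine ⟨fun p hp => hR'd p hp.1, ?_, ?_⟩
  · -- concavity on [0, pb)
    refine concaveOn_of_hasDerivWithinAt2_nonpos (f' := R')
      (f'' := fun x => N * x ^ ((1 - σ - θ) / θ) *
        ((η * κ * x ^ ((1 - θ) / θ) * (2 - θ - σ) - (1 + θ - σ)) / (Z * θ ^ 2)))
      (convex_Ico _ _) ?_ (fun x hx => ?_) (fun x hx => ?_) (fun x hx => ?_)
    · -- continuity on Ico 0 pb
      intro x hx
      rcases eq_or_lt_of_le hx.1 with h0 | h0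
      · subst h0
        have c1 : ContinuousAt (fun x : ℝ => x ^ ((1 - σ) / θ)) 0 :=
          Real.continuousAt_rpow_const 0 _ (Or.inr (by positivity))
        have c2 : ContinuousAt (fun x : ℝ => x ^ ((2 - σ) / θ)) 0 :=
          Real.continuousAt_rpow_const 0 _ (Or.inr (by positivity))
        have cbig : ContinuousAt (fun x : ℝ => N * (x * (1 - x ^ ((1 - σ) / θ) / (Z * (1 - σ)))
            - η * κ * (Φmax ^ (2 - σ) - x ^ ((2 - σ) / θ)) / (Z * (2 - σ)))) 0 :=
          (((continuousAt_id.mul (continuousAt_const.sub (c1.div_const _))).sub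
            (((continuousAt_const.sub c2).const_mul (η * κ)).div_const _)).const_mul N)
        have : ContinuousAt R 0 :=
          cbig.congr (Filter.Eventually.of_forall fun x => (hR x).symm)
        exact this.continuousWithinAt
      · exact (hRd x h0).continuousAt.continuousWithinAt
    · rw [interior_Ico] at hx
      exact (hRd x hx.1).hasDerivWithinAt
    · rw [interior_Ico] at hx
      exact (hR'd x hx.1).hasDerivWithinAt
    · rw [interior_Ico] at hx
      obtain ⟨hx0, hxpb⟩ := hx
      have he : (0:ℝ) < (1 - θ) / θ := by positivity
      have hlt : x ^ ((1 - θ) / θ) < X := by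
        calc x ^ ((1 - θ) / θ) < pb ^ ((1 - θ) / θ) :=
              Real.rpow_lt_rpow hx0.le hxpb he
          _ = X := by
              rw [hpb, ← Real.rpow_mul hXpos.le,
                show θ / (1 - θ) * ((1 - θ) / θ) = 1 by field_simp]
              exact Real.rpow_one X
      have hnum : η * κ * x ^ ((1 - θ) / θ) * (2 - θ - σ) - (1 + θ - σ) < 0 := by
        have : η * κ * x ^ ((1 - θ) / θ) * (2 - θ - σ) < η * κ * X * (2 - θ - σ) := by
          have h := mul_lt_mul_of_pos_left hlt (by positivity : (0:ℝ) < η * κ)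
          exact mul_lt_mul_of_pos_right h h2θσ
        have hXeq : η * κ * X * (2 - θ - σ) = 1 + θ - σ := by
          rw [hXdef]; field_simp
        linarith
      have hfac : (0:ℝ) < N * x ^ ((1 - σ - θ) / θ) := by positivity
      have hden : (0:ℝ) < Z * θ ^ 2 := by positivity
      exact mul_nonpos_of_nonneg_of_nonpos hfac.le
        (div_nonpos_of_nonpos_of_nonneg hnum.le hden.le)
  · -- convexity on (pb, pmax)
    refine convexOn_of_hasDerivWithinAt2_nonneg (f' := R')
      (f'' := fun x => N * x ^ ((1 - σ - θ) / θ) *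
        ((η * κ * x ^ ((1 - θ) / θ) * (2 - θ - σ) - (1 + θ - σ)) / (Z * θ ^ 2)))
      (convex_Ioo _ _)
      (fun x hx => (hRd x (hpbpos.trans hx.1)).continuousAt.continuousWithinAt)
      (fun x hx => ?_) (fun x hx => ?_) (fun x hx => ?_)
    · rw [interior_Ioo] at hx
      exact (hRd x (hpbpos.trans hx.1)).hasDerivWithinAt
    · rw [interior_Ioo] at hx
      exact (hR'd x (hpbpos.trans hx.1)).hasDerivWithinAt
    · rw [interior_Ioo] at hx
      obtain ⟨hxpb, _⟩ := hx
      have hx0 : 0 < x := hpbpos.trans hxpb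
      have he : (0:ℝ) < (1 - θ) / θ := by positivity
      have hlt : X < x ^ ((1 - θ) / θ) := by
        calc X = pb ^ ((1 - θ) / θ) := by
              rw [hpb, ← Real.rpow_mul hXpos.le]
              rw [show θ / (1 - θ) * ((1 - θ) / θ) = 1 by field_simp]
              exact (Real.rpow_one X).symm
          _ < x ^ ((1 - θ) / θ) := Real.rpow_lt_rpow hpbpos.le hxpb he
      have hnum : 0 < η * κ * x ^ ((1 - θ) / θ) * (2 - θ - σ) - (1 + θ - σ) := by
        have : η * κ * X * (2 - θ - σ) < η * κ * x ^ ((1 - θ) / θ) * (2 - θ - σ) := by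
          have h := mul_lt_mul_of_pos_left hlt (by positivity : (0:ℝ) < η * κ)
          exact mul_lt_mul_of_pos_right h h2θσ
        have hXeq : η * κ * X * (2 - θ - σ) = 1 + θ - σ := by
          rw [hXdef]; field_simp
        linarith
      have hfac : (0:ℝ) < N * x ^ ((1 - σ - θ) / θ) := by positivity
      have hden : (0:ℝ) < Z * θ ^ 2 := by positivity
      exact mul_nonneg hfac.le (div_nonneg hnum.le hden.le)
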